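/- The classical and relaxed optimal stopping problems have the same optimal value: sup over all 𝒯-valued stopping times τ of E[Y_τ] equals sup over all relaxed stopping rules μ = (P_t)_{t∈𝒯} of E[Σ_{t∈𝒯} P_t Y_t]. -/

import Mathlib

open MeasureTheory
open scoped ENNReal NNReal


lemma stop_reward_repr {T Ω : Type*} [Fintype T] [DecidableEq T] (τ : Ω → T) (Y : T → Ω → ℝ)
    (ω : Ω) : Y (τ ω) ω = ∑ t, Set.indicator {ω' | τ ω' = t} (Y t) ω := by
  rw [Finset.sum_eq_single_of_mem (τ ω) (Finset.mem_univ _)]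
  · exact (Set.indicator_of_mem (by exact rfl) _).symm
  · intro t _ hts
    refine (Set.indicator_of_notMem ?_ _)
    exact fun (h : τ ω = t) => hts h.symm


/-- For a stopping time, the event `{τ = t}` is `𝓕 t`-measurable. -/
lemma stop_eq_measurable {T Ω : Type*} [Fintype T] [LinearOrder T]
    (𝓕 : T → MeasurableSpace Ω) (hmono : Monotone 𝓕) (τ : Ω → T)
    (hτ : ∀ t, MeasurableSet[𝓕 t] {ω | τ ω ≤ t}) (t : T) :
    MeasurableSet[𝓕 t] {ω | τ ω = t} := by
  have hset : {ω | τ ω = t} = {ω | τ ω ≤ t} ∩ (⋃ s ∈ Set.Iio t, {ω | τ ω ≤ s})ᶜ := by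
    ext ω
    simp only [Set.mem_setOf_eq, Set.mem_inter_iff, Set.mem_compl_iff, Set.mem_iUnion,
      Set.mem_Iio, not_exists]
    constructor
    · rintro rfl
      exact ⟨le_rfl, fun s hs h => absurd (le_trans (le_refl (τ ω)) h) (not_le.mpr hs)⟩
    · rintro ⟨h1, h2⟩
      by_contra hne
      exact h2 (τ ω) (lt_of_le_of_ne h1 hne) le_rfl
  rw [hset]
  exact (hτ t).inter ((MeasurableSet.biUnion (Set.to_countable _)
    (fun s hs => hmono hs.le _ (hτ s))).compl)


/-- The relaxed value of any relaxed stopping rule is dominated by the classical value. -/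
lemma relaxed_le_csSup {T Ω : Type*} [Fintype T] [Nonempty T] [LinearOrder T]
    [m0 : MeasurableSpace Ω] (Q : Measure Ω) [IsProbabilityMeasure Q]
    (𝓕 : T → MeasurableSpace Ω) (hmono : Monotone 𝓕) (hle : ∀ t, 𝓕 t ≤ m0)
    (Y : T → Ω → ℝ) (hadp : ∀ t, Measurable[𝓕 t] (Y t))
    (hint : ∀ t, Integrable (Y t) Q)
    (P : T → Ω → ℝ) (hPm : ∀ t, Measurable[𝓕 t] (P t))
    (hP0 : ∀ t ω, 0 ≤ P t ω) (hP1 : ∀ t ω, P t ω ≤ 1) (hPsum : ∀ ω, ∑ t, P t ω = 1)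
    (hbddA : BddAbove {r : ℝ | ∃ τ : Ω → T,
        (∀ t, MeasurableSet[𝓕 t] {ω | τ ω ≤ t}) ∧ r = ∫ ω, Y (τ ω) ω ∂Q}) :
    ∫ ω, (∑ t, P t ω * Y t ω) ∂Q ≤ sSup {r : ℝ | ∃ τ : Ω → T,
        (∀ t, MeasurableSet[𝓕 t] {ω | τ ω ≤ t}) ∧ r = ∫ ω, Y (τ ω) ω ∂Q} := by
  classical
  set A := {r : ℝ | ∃ τ : Ω → T,
      (∀ t, MeasurableSet[𝓕 t] {ω | τ ω ≤ t}) ∧ r = ∫ ω, Y (τ ω) ω ∂Q} with hAdef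
  -- cumulative distribution functions
  set F : T → Ω → ℝ := fun t ω => ∑ s ∈ Finset.univ.filter (fun s => s ≤ t), P s ω with hFdef
  set Fp : T → Ω → ℝ := fun t ω => ∑ s ∈ Finset.univ.filter (fun s => s < t), P s ω with hFpdef
  have hFp0 : ∀ t ω, 0 ≤ Fp t ω := fun t ω => Finset.sum_nonneg fun s _ => hP0 s ω
  have hFpF : ∀ t ω, Fp t ω ≤ F t ω := fun t ω =>
    Finset.sum_le_sum_of_subset_of_nonneg
      (Finset.monotone_filter_right _ (fun s _ hs => le_of_lt hs))
      (fun s _ _ => hP0 s ω)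
  have hF1 : ∀ t ω, F t ω ≤ 1 := fun t ω => by
    calc F t ω ≤ ∑ s, P s ω :=
          Finset.sum_le_sum_of_subset_of_nonneg (Finset.filter_subset _ _)
            (fun s _ _ => hP0 s ω)
      _ = 1 := hPsum ω
  have hFmono : ∀ (ω : Ω) {s t : T}, s ≤ t → F s ω ≤ F t ω := by
    intro ω s t hst
    exact Finset.sum_le_sum_of_subset_of_nonneg
      (Finset.monotone_filter_right _ (fun x _ hx => le_trans hx hst))
      (fun x _ _ => hP0 x ω)
  have hFeqP : ∀ t ω, F t ω = Fp t ω + P t ω := by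
    intro t ω
    have hins : Finset.univ.filter (fun s => s ≤ t)
        = insert t (Finset.univ.filter (fun s => s < t)) := by
      ext x
      simp [le_iff_lt_or_eq, or_comm]
    rw [hFdef]
    simp only []
    rw [hins, Finset.sum_insert (by simp)]
    ring
  -- the top element of T
  obtain ⟨t1, ht1⟩ : ∃ t1 : T, ∀ s, s ≤ t1 :=
    ⟨(Finset.univ : Finset T).max' Finset.univ_nonempty,
      fun s => Finset.le_max' _ s (Finset.mem_univ s)⟩
  have hFtop : ∀ ω, F t1 ω = 1 := by
    intro ω
    rw [hFdef]
    simp only []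
    rw [Finset.filter_true_of_mem (fun x _ => ht1 x)]
    exact hPsum ω
  -- measurability
  have hFadp : ∀ t, Measurable[𝓕 t] (F t) := fun t =>
    Finset.measurable_sum _ fun s hs =>
      (hPm s).mono (hmono ((Finset.mem_filter.mp hs).2)) le_rfl
  have hFm : ∀ t, Measurable (F t) := fun t => (hFadp t).mono (hle t) le_rfl
  have hFpm : ∀ t, Measurable (Fp t) := fun t =>
    Finset.measurable_sum _ fun s _ => (hPm s).mono (hle s) le_rfl
  have hYm : ∀ t, Measurable (Y t) := fun t => (hadp t).mono (hle t) le_rfl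
  -- the randomized stopping times
  set τ' : ℝ → Ω → T := fun u ω =>
    if h : (Finset.univ.filter (fun t => u ≤ F t ω)).Nonempty then Finset.min' _ h else t1
    with hτ'def
  have hne : ∀ u, u ≤ 1 → ∀ ω, (Finset.univ.filter (fun t => u ≤ F t ω)).Nonempty := by
    intro u hu ω
    exact ⟨t1, Finset.mem_filter.mpr ⟨Finset.mem_univ _, by rw [hFtop]; exact hu⟩⟩
  have hτ'val : ∀ u (hu : u ≤ 1) (ω : Ω),
      τ' u ω = Finset.min' _ (hne u hu ω) := fun u hu ω => dif_pos _
  have hτ'F : ∀ u (hu : u ≤ 1) (ω : Ω), u ≤ F (τ' u ω) ω := by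
    intro u hu ω
    rw [hτ'val u hu ω]
    exact (Finset.mem_filter.mp (Finset.min'_mem _ (hne u hu ω))).2
  have hτ'min : ∀ u (hu : u ≤ 1) (ω : Ω) (t : T), u ≤ F t ω → τ' u ω ≤ t := by
    intro u hu ω t ht
    rw [hτ'val u hu ω]
    exact Finset.min'_le _ t (Finset.mem_filter.mpr ⟨Finset.mem_univ _, ht⟩)
  -- the key previous-cdf bound
  have hτ'Fp : ∀ u, u ∈ Set.Ioc (0:ℝ) 1 → ∀ ω, Fp (τ' u ω) ω < u := by
    intro u hu ω
    by_contra hcon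
    push_neg at hcon
    set s := τ' u ω with hs
    rcases (Finset.univ.filter (fun t => t < s)).eq_empty_or_nonempty with hemp | hne2
    · have : Fp s ω = 0 := by rw [hFpdef]; simp only []; rw [hemp, Finset.sum_empty]
      rw [this] at hcon
      exact absurd hu.1 (not_lt.mpr hcon)
    · obtain ⟨m, hmmem, hmmax⟩ : ∃ m ∈ Finset.univ.filter (fun t => t < s),
          ∀ x ∈ Finset.univ.filter (fun t => t < s), x ≤ m :=
        ⟨_, Finset.max'_mem _ hne2, fun x hx => Finset.le_max' _ x hx⟩
      have hms : m < s := (Finset.mem_filter.mp hmmem).2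
      have hFm_eq : F m ω = Fp s ω := by
        rw [hFdef, hFpdef]
        simp only []
        congr 1
        ext x
        simp only [Finset.mem_filter, Finset.mem_univ, true_and]
        constructor
        · intro hx; exact lt_of_le_of_lt hx hms
        · intro hx; exact hmmax x (Finset.mem_filter.mpr ⟨Finset.mem_univ _, hx⟩)
      have : s ≤ m := hτ'min u hu.2 ω m (by rw [hFm_eq]; exact hcon)
      exact absurd hms (not_lt.mpr this)
  -- pointwise identity between the indicator sum and the stopped reward
  have hpoint : ∀ u, u ∈ Set.Ioc (0:ℝ) 1 → ∀ ω,
      (∑ t, Set.indicator (Set.Ioc (Fp t ω) (F t ω)) (fun _ => Y t ω) u)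
        = Y (τ' u ω) ω := by
    intro u hu ω
    rw [Finset.sum_eq_single_of_mem (τ' u ω) (Finset.mem_univ _)]
    · exact Set.indicator_of_mem (Set.mem_Ioc.mpr ⟨hτ'Fp u hu ω, hτ'F u hu.2 ω⟩) _
    · intro t _ hts
      refine Set.indicator_of_notMem ?_ _
      rintro ⟨h1, h2⟩
      have hst : τ' u ω < t := lt_of_le_of_ne (hτ'min u hu.2 ω t h2) (Ne.symm hts)
      have hFs : F (τ' u ω) ω ≤ Fp t ω :=
        Finset.sum_le_sum_of_subset_of_nonneg
          (Finset.monotone_filter_right _ (fun x _ hx => lt_of_le_of_lt hx hst))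
          (fun x _ _ => hP0 x ω)
      exact absurd (le_trans (hτ'F u hu.2 ω) hFs) (not_le.mpr h1)
  -- the product-measure function
  set μu : Measure ℝ := volume.restrict (Set.Ioc (0:ℝ) 1) with hμu
  haveI : IsProbabilityMeasure μu := ⟨by
    rw [hμu, Measure.restrict_apply_univ, Real.volume_Ioc]
    norm_num⟩
  set H : ℝ × Ω → ℝ := fun p =>
    ∑ t, Set.indicator (Set.Ioc (Fp t p.2) (F t p.2)) (fun _ => Y t p.2) p.1 with hHdef
  have hHmeas : Measurable H := by
    refine Finset.measurable_sum _ fun t _ => ?_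
    have heq : (fun p : ℝ × Ω =>
        Set.indicator (Set.Ioc (Fp t p.2) (F t p.2)) (fun _ => Y t p.2) p.1)
        = fun p : ℝ × Ω => if Fp t p.2 < p.1 ∧ p.1 ≤ F t p.2 then Y t p.2 else 0 := by
      funext p
      simp [Set.indicator_apply, Set.mem_Ioc]
    rw [heq]
    have hset : MeasurableSet {p : ℝ × Ω | Fp t p.2 < p.1 ∧ p.1 ≤ F t p.2} := by
      rw [Set.setOf_and]
      exact (measurableSet_lt ((hFpm t).comp measurable_snd) measurable_fst).inter
        (measurableSet_le measurable_fst ((hFm t).comp measurable_snd))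
    exact Measurable.ite hset ((hYm t).comp measurable_snd) measurable_const
  have hGint : Integrable (fun p : ℝ × Ω => ∑ t, |Y t p.2|) (μu.prod Q) := by
    have h1 : Integrable (fun ω => ∑ t, |Y t ω|) Q :=
      integrable_finset_sum _ fun t _ => (hint t).abs
    have := Integrable.mul_prod (integrable_const (1:ℝ) (μ := μu)) h1
    simpa using this
  have hHint : Integrable H (μu.prod Q) := by
    refine hGint.mono' hHmeas.aestronglyMeasurable (Filter.Eventually.of_forall fun p => ?_)
    rw [Real.norm_eq_abs, hHdef]
    refine le_trans (Finset.abs_sum_le_sum_abs _ _) (Finset.sum_le_sum fun t _ => ?_)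
    by_cases h : p.1 ∈ Set.Ioc (Fp t p.2) (F t p.2)
    · rw [Set.indicator_of_mem h]
    · rw [Set.indicator_of_notMem h, abs_zero]; exact abs_nonneg _
  -- inner integral over u
  have hinner : ∀ ω, ∫ u, H (u, ω) ∂μu = ∑ t, P t ω * Y t ω := by
    intro ω
    rw [hHdef]
    simp only []
    rw [integral_finset_sum _ (fun t _ => (integrable_const (Y t ω)).indicator measurableSet_Ioc)]
    refine Finset.sum_congr rfl fun t _ => ?_
    rw [integral_indicator measurableSet_Ioc, hμu,
      Measure.restrict_restrict measurableSet_Ioc,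
      Set.inter_eq_left.mpr (Set.Ioc_subset_Ioc (hFp0 t ω) (hF1 t ω)),
      setIntegral_const, Real.volume_real_Ioc_of_le (hFpF t ω), smul_eq_mul]
    rw [hFeqP t ω]
    ring
  -- swap integrals
  have hr2 : ∫ ω, (∑ t, P t ω * Y t ω) ∂Q = ∫ u, (∫ ω, H (u, ω) ∂Q) ∂μu := by
    have : (fun ω => ∑ t, P t ω * Y t ω) = fun ω => ∫ u, H (u, ω) ∂μu :=
      funext fun ω => (hinner ω).symm
    rw [this]
    exact (integral_integral_swap hHint).symm
  -- each slice value lies in A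
  have hbound : ∀ u ∈ Set.Ioc (0:ℝ) 1, (∫ ω, H (u, ω) ∂Q) ≤ sSup A := by
    intro u hu
    refine le_csSup hbddA ?_
    refine ⟨τ' u, fun t => ?_, ?_⟩
    · have hset : {ω | τ' u ω ≤ t} = F t ⁻¹' Set.Ici u := by
        ext ω
        simp only [Set.mem_setOf_eq, Set.mem_preimage, Set.mem_Ici]
        constructor
        · intro h; exact le_trans (hτ'F u hu.2 ω) (hFmono ω h)
        · intro h; exact hτ'min u hu.2 ω t h
      rw [hset]
      exact hFadp t measurableSet_Ici
    · simp only [hHdef]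
      exact integral_congr_ae (Filter.Eventually.of_forall fun ω => hpoint u hu ω)
  calc ∫ ω, (∑ t, P t ω * Y t ω) ∂Q = ∫ u, (∫ ω, H (u, ω) ∂Q) ∂μu := hr2
    _ ≤ ∫ _, sSup A ∂μu := by
        refine integral_mono_ae hHint.integral_prod_left (integrable_const _) ?_
        rw [hμu]
        filter_upwards [ae_restrict_mem measurableSet_Ioc] with u hu using hbound u hu
    _ = sSup A := by simp

/-- **Classical and relaxed optimal stopping have the same value** (Proposition 3.1, first
assertion).

`T` is a finite nonempty linearly ordered set of exercise dates, `(Ω, 𝓐, Q)` a probability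
space with a filtration `𝓕` (monotone family of sub-σ-algebras of the ambient σ-algebra),
and `(Y t)` an adapted family of integrable rewards.  The supremum of `E[Y_τ]` over all
`T`-valued stopping times `τ` equals the supremum of `E[Σ_t P_t Y_t]` over all relaxed
stopping rules `μ = (P_t)` (adapted, `0 ≤ P_t ≤ 1`, `Σ_t P_t = 1`). -/
theorem value_classical_eq_value_relaxed
    {T Ω : Type*} [Fintype T] [Nonempty T] [LinearOrder T]
    [m0 : MeasurableSpace Ω] (Q : Measure Ω) [IsProbabilityMeasure Q]
    (𝓕 : T → MeasurableSpace Ω) (hmono : Monotone 𝓕) (hle : ∀ t, 𝓕 t ≤ m0)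
    (Y : T → Ω → ℝ) (hadp : ∀ t, Measurable[𝓕 t] (Y t))
    (hint : ∀ t, Integrable (Y t) Q) :
    sSup {r : ℝ | ∃ τ : Ω → T,
        (∀ t, MeasurableSet[𝓕 t] {ω | τ ω ≤ t}) ∧
        r = ∫ ω, Y (τ ω) ω ∂Q} =
    sSup {r : ℝ | ∃ P : T → Ω → ℝ,
        (∀ t, Measurable[𝓕 t] (P t)) ∧
        (∀ t ω, 0 ≤ P t ω) ∧ (∀ t ω, P t ω ≤ 1) ∧
        (∀ ω, ∑ t, P t ω = 1) ∧
        r = ∫ ω, (∑ t, P t ω * Y t ω) ∂Q} := by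
  classical
  set A := {r : ℝ | ∃ τ : Ω → T,
      (∀ t, MeasurableSet[𝓕 t] {ω | τ ω ≤ t}) ∧ r = ∫ ω, Y (τ ω) ω ∂Q} with hAdef
  set B := {r : ℝ | ∃ P : T → Ω → ℝ,
      (∀ t, Measurable[𝓕 t] (P t)) ∧
      (∀ t ω, 0 ≤ P t ω) ∧ (∀ t ω, P t ω ≤ 1) ∧
      (∀ ω, ∑ t, P t ω = 1) ∧
      r = ∫ ω, (∑ t, P t ω * Y t ω) ∂Q} with hBdef
  set M : ℝ := ∑ t, ∫ ω, |Y t ω| ∂Q with hM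
  -- A is nonempty (constant stopping times)
  have hAne : A.Nonempty := by
    refine ⟨_, (fun _ => Classical.arbitrary T), fun t => ?_, rfl⟩
    by_cases h : Classical.arbitrary T ≤ t
    · have : {ω : Ω | Classical.arbitrary T ≤ t} = Set.univ := by
        ext ω; simp [h]
      rw [this]; exact @MeasurableSet.univ _ (𝓕 t)
    · have : {ω : Ω | Classical.arbitrary T ≤ t} = ∅ := by
        ext ω; simp [h]
      rw [this]; exact @MeasurableSet.empty _ (𝓕 t)
  -- every classical value is bounded by M
  have hAub : ∀ r ∈ A, r ≤ M := by
    rintro r ⟨τ, hτ, rfl⟩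
    have heq := stop_eq_measurable 𝓕 hmono τ hτ
    have hI : ∀ t, Integrable (Set.indicator {ω' | τ ω' = t} (Y t)) Q := fun t =>
      (hint t).indicator (hle t _ (heq t))
    calc ∫ ω, Y (τ ω) ω ∂Q
        = ∑ t, ∫ ω, Set.indicator {ω' | τ ω' = t} (Y t) ω ∂Q := by
          rw [← integral_finset_sum _ (fun t _ => hI t)]
          exact integral_congr_ae (Filter.Eventually.of_forall fun ω => stop_reward_repr τ Y ω)
      _ ≤ ∑ t, ∫ ω, |Y t ω| ∂Q := by
          refine Finset.sum_le_sum fun t _ => integral_mono (hI t) (hint t).abs fun ω => ?_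
          by_cases h : ω ∈ {ω' | τ ω' = t}
          · rw [Set.indicator_of_mem h]; exact le_abs_self _
          · rw [Set.indicator_of_notMem h]; exact abs_nonneg _
  -- every relaxed value is bounded by M
  have hBub : ∀ r ∈ B, r ≤ M := by
    rintro r ⟨P, hPm, hP0, hP1, hPsum, rfl⟩
    have hPint : ∀ t, Integrable (fun ω => P t ω * Y t ω) Q := fun t =>
      (hint t).bdd_mul (c := 1) ((hPm t).mono (hle t) le_rfl).aestronglyMeasurable
        (Filter.Eventually.of_forall fun ω => by
          rw [Real.norm_eq_abs, abs_of_nonneg (hP0 t ω)]; exact hP1 t ω)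
    calc ∫ ω, (∑ t, P t ω * Y t ω) ∂Q
        = ∑ t, ∫ ω, P t ω * Y t ω ∂Q := integral_finset_sum _ (fun t _ => hPint t)
      _ ≤ ∑ t, ∫ ω, |Y t ω| ∂Q := by
          refine Finset.sum_le_sum fun t _ => integral_mono (hPint t) (hint t).abs fun ω => ?_
          have h1 : P t ω * Y t ω ≤ P t ω * |Y t ω| :=
            mul_le_mul_of_nonneg_left (le_abs_self _) (hP0 t ω)
          have h2 : P t ω * |Y t ω| ≤ 1 * |Y t ω| :=
            mul_le_mul_of_nonneg_right (hP1 t ω) (abs_nonneg _)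
          linarith
  -- A ⊆ B : every stopping time induces a relaxed rule with the same value
  have hAsubB : A ⊆ B := by
    rintro r ⟨τ, hτ, rfl⟩
    refine ⟨fun t ω => if τ ω = t then 1 else 0, fun t => ?_, fun t ω => ?_, fun t ω => ?_,
      fun ω => ?_, ?_⟩
    · exact Measurable.ite (stop_eq_measurable 𝓕 hmono τ hτ t) measurable_const measurable_const
    · dsimp only; split_ifs <;> norm_num
    · dsimp only; split_ifs <;> norm_num
    · simp
    · refine integral_congr_ae (Filter.Eventually.of_forall fun ω => ?_)
      simp only [ite_mul, one_mul, zero_mul]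
      simp
  have hbddA : BddAbove A := ⟨M, fun r hr => hAub r hr⟩
  have hbddB : BddAbove B := ⟨M, fun r hr => hBub r hr⟩
  refine le_antisymm (csSup_le_csSup hbddB hAne hAsubB) (csSup_le (hAne.mono hAsubB) ?_)
  rintro r ⟨P, hPm, hP0, hP1, hPsum, rfl⟩
  exact relaxed_le_csSup Q 𝓕 hmono hle Y hadp hint P hPm hP0 hP1 hPsum hbddA
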